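/- Let u ≥ 2 be a natural number, let B be the space of u-tuples of reals with the ℓ¹ norm ‖z‖ = ∑_{j<u} |z_j|, let T : B → B be the cyclic right shift (T z)_j = z_{(j−1) mod u}, and let x = (1, 0, …, 0). Then for every natural number k with 2^{k+1} ≤ u, ‖A_{2^{k+1}} x − A_{2^k} x‖ = 1. Consequently, for p ≥ 1, ∑_{k : 2^{k+1} ≤ u} ‖A_{2^{k+1}} x − A_{2^k} x‖^p ≥ ⌊log₂ u⌋, which is unbounded as u → ∞, even though T is an isometry and ‖x‖ = 1. -/

import Mathlib

open Finset

/-- The cyclic right shift on `u`-tuples of reals: `(T z) j = z ((j - 1) mod u)`. -/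
def cycShift (u : ℕ) (z : Fin u → ℝ) : Fin u → ℝ :=
  fun j => z ⟨((j : ℕ) + (u - 1)) % u, Nat.mod_lt _ (Nat.lt_of_le_of_lt (Nat.zero_le _) j.isLt)⟩

/-- The ergodic averages `A n z = (1/n) ∑_{i<n} Tⁱ z` for the cyclic shift. -/
noncomputable def cycShiftAvg (u n : ℕ) (z : Fin u → ℝ) : Fin u → ℝ :=
  (n : ℝ)⁻¹ • ∑ i ∈ Finset.range n, (cycShift u)^[i] z

/-- The `ℓ¹` norm on `u`-tuples of reals. -/
def l1Norm (u : ℕ) (z : Fin u → ℝ) : ℝ := ∑ j : Fin u, |z j|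

/-- The point `x = (1, 0, …, 0)`. -/
def e0 (u : ℕ) : Fin u → ℝ := fun j => if (j : ℕ) = 0 then 1 else 0

/-- On `ℓ¹_u` with the cyclic right shift `T` (an isometry) and `x = (1,0,…,0)` (of norm `1`):
`‖A_{2^{k+1}} x − A_{2^k} x‖ = 1` whenever `2^{k+1} ≤ u`; consequently, for `p ≥ 1`,
`∑_{k : 2^{k+1} ≤ u} ‖A_{2^{k+1}} x − A_{2^k} x‖^p ≥ ⌊log₂ u⌋`, which is unbounded in `u`. -/

lemma key_mod (u : ℕ) (hu : 0 < u) (i j : ℕ) (hj : j < u) :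
    ((j + (u-1)) % u = i % u) ↔ (j = (i+1) % u) := by
  have h1 : (j + (u-1) + 1) % u = j % u := by
    have h2 : j + (u-1) + 1 = j + u := by omega
    rw [h2, Nat.add_mod_right]
  constructor
  · intro h
    have h3 := Nat.ModEq.add_right 1 (h : j + (u-1) ≡ i [MOD u])
    have : j % u = (i+1) % u := by rw [← h1]; exact h3
    rw [Nat.mod_eq_of_lt hj] at this
    exact this
  · intro h
    have hje : j % u = (i+1) % u := by
      rw [Nat.mod_eq_of_lt hj, h]
    have h3 := Nat.ModEq.add_right (u-1) (hje : j ≡ i + 1 [MOD u])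
    have h4 : i + 1 + (u-1) = i + u := by omega
    calc (j + (u-1)) % u = (i + 1 + (u-1)) % u := h3
      _ = i % u := by rw [h4, Nat.add_mod_right]

lemma iter_e0 (u : ℕ) (hu : 0 < u) (i : ℕ) (j : Fin u) :
    (cycShift u)^[i] (e0 u) j = if (j : ℕ) = i % u then 1 else 0 := by
  induction i generalizing j with
  | zero => simp [e0]; rfl
  | succ i ih =>
      rw [Function.iterate_succ_apply']
      show (cycShift u)^[i] (e0 u) ⟨((j : ℕ) + (u - 1)) % u, _⟩ = _
      rw [ih]
      simp only [key_mod u hu i (j : ℕ) j.isLt]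

lemma avg_apply (u n : ℕ) (hn : 0 < n) (hnu : n ≤ u) (j : Fin u) :
    cycShiftAvg u n (e0 u) j = if (j : ℕ) < n then (n : ℝ)⁻¹ else 0 := by
  have hu : 0 < u := lt_of_lt_of_le hn hnu
  unfold cycShiftAvg
  simp only [Pi.smul_apply, Finset.sum_apply, smul_eq_mul]
  have : ∀ i ∈ Finset.range n, (cycShift u)^[i] (e0 u) j
      = if (j : ℕ) = i then (1:ℝ) else 0 := by
    intro i hi
    rw [iter_e0 u hu, Nat.mod_eq_of_lt (lt_of_lt_of_le (mem_range.mp hi) hnu)]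
  rw [Finset.sum_congr rfl this, Finset.sum_ite_eq]
  simp only [Finset.mem_range]
  split_ifs <;> simp

theorem stmt19 (u : ℕ) (hu : 2 ≤ u) :
    (∀ z : Fin u → ℝ, l1Norm u (cycShift u z) = l1Norm u z) ∧
    l1Norm u (e0 u) = 1 ∧
    (∀ k : ℕ, 2 ^ (k + 1) ≤ u →
      l1Norm u (cycShiftAvg u (2 ^ (k + 1)) (e0 u) - cycShiftAvg u (2 ^ k) (e0 u)) = 1) ∧
    (∀ p : ℝ, 1 ≤ p →
      (Nat.log 2 u : ℝ) ≤
        ∑ k ∈ (Finset.range u).filter (fun k => 2 ^ (k + 1) ≤ u),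
          l1Norm u (cycShiftAvg u (2 ^ (k + 1)) (e0 u) - cycShiftAvg u (2 ^ k) (e0 u)) ^ p) := by
  haveI : NeZero u := ⟨by omega⟩
  have h0u : 0 < u := by omega
  -- isometry
  have hiso : ∀ z : Fin u → ℝ, l1Norm u (cycShift u z) = l1Norm u z := by
    intro z
    unfold l1Norm cycShift
    set c : Fin u := ⟨u - 1, by omega⟩ with hc
    have he : ∀ j : Fin u, (⟨((j : ℕ) + (u - 1)) % u,
        Nat.mod_lt _ (Nat.lt_of_le_of_lt (Nat.zero_le _) j.isLt)⟩ : Fin u) = j + c := by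
      intro j
      apply Fin.ext
      simp [Fin.add_def, hc]
    simp only [he]
    exact Equiv.sum_comp (Equiv.addRight c) (fun j => |z j|)
  have hnorm1 : l1Norm u (e0 u) = 1 := by
    unfold l1Norm e0
    rw [Fin.sum_univ_eq_sum_range (fun i => |if i = 0 then (1:ℝ) else 0|)]
    have hcg : ∀ i ∈ Finset.range u, |if i = 0 then (1:ℝ) else 0| = if i = 0 then (1:ℝ) else 0 :=
      fun i _ => by split_ifs <;> simp
    rw [Finset.sum_congr rfl hcg, Finset.sum_ite_eq']
    simp [Finset.mem_range, h0u]
  have hmain : ∀ k : ℕ, 2 ^ (k + 1) ≤ u →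
      l1Norm u (cycShiftAvg u (2 ^ (k + 1)) (e0 u) - cycShiftAvg u (2 ^ k) (e0 u)) = 1 := by
    intro k hk
    have hm : (0:ℕ) < 2 ^ k := Nat.pow_pos (by norm_num)
    have hm2 : (0:ℕ) < 2 ^ (k+1) := Nat.pow_pos (by norm_num)
    have hku : 2 ^ k ≤ u := le_trans (Nat.pow_le_pow_right (by norm_num) (Nat.le_succ k)) hk
    set M : ℝ := (2:ℝ) ^ k with hM
    have hMpos : (0:ℝ) < M := by positivity
    have hcast : ((2 ^ (k+1) : ℕ) : ℝ) = 2 * M := by push_cast [pow_succ]; ring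
    have hcast2 : ((2 ^ k : ℕ) : ℝ) = M := by push_cast; rfl
    have habs : ∀ j : Fin u,
        |(cycShiftAvg u (2 ^ (k + 1)) (e0 u) - cycShiftAvg u (2 ^ k) (e0 u)) j|
        = if (j : ℕ) < 2 ^ (k+1) then (2*M)⁻¹ else 0 := by
      intro j
      rw [Pi.sub_apply, avg_apply u _ hm2 hk, avg_apply u _ hm hku, hcast, hcast2]
      have hle : (2:ℕ)^k ≤ 2^(k+1) := Nat.pow_le_pow_right (by norm_num) (Nat.le_succ k)
      split_ifs with h2 h1 h1
      · have : (2*M)⁻¹ - M⁻¹ = -(2*M)⁻¹ := by field_simp; ring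
        rw [this, abs_neg, abs_of_nonneg (by positivity)]
      · rw [sub_zero, abs_of_nonneg (by positivity)]
      · exact absurd (lt_of_lt_of_le h1 hle) h2
      · simp
    unfold l1Norm
    rw [Finset.sum_congr rfl (fun j _ => habs j)]
    rw [Fin.sum_univ_eq_sum_range (fun i => if i < 2 ^ (k+1) then (2*M)⁻¹ else 0)]
    rw [← Finset.sum_filter]
    have hfil : (Finset.range u).filter (fun i => i < 2 ^ (k+1)) = Finset.range (2 ^ (k+1)) := by
      ext i; simp only [Finset.mem_filter, Finset.mem_range]
      constructor
      · exact fun h => h.2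
      · exact fun h => ⟨lt_of_lt_of_le h hk, h⟩
    rw [hfil, Finset.sum_const, Finset.card_range, nsmul_eq_mul, hcast]
    field_simp
  refine ⟨hiso, hnorm1, hmain, ?_⟩
  intro p hp
  have hfil : (Finset.range u).filter (fun k => 2 ^ (k + 1) ≤ u)
      = Finset.range (Nat.log 2 u) := by
    ext k
    simp only [Finset.mem_filter, Finset.mem_range]
    constructor
    · rintro ⟨-, h2⟩
      have := (Nat.le_log_iff_pow_le (by norm_num) (by omega)).symm.mp h2
      omega
    · intro h
      have h2 : 2 ^ (k+1) ≤ u := (Nat.le_log_iff_pow_le (by norm_num) (by omega)).symm.mpr (by omega)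
      refine ⟨?_, h2⟩
      have := lt_of_lt_of_le ((Nat.lt_two_pow_self (n := k+1))) h2
      omega
  rw [hfil]
  have : ∀ k ∈ Finset.range (Nat.log 2 u),
      l1Norm u (cycShiftAvg u (2 ^ (k + 1)) (e0 u) - cycShiftAvg u (2 ^ k) (e0 u)) ^ p = 1 := by
    intro k hk
    rw [hmain k ((Nat.le_log_iff_pow_le (by norm_num) (by omega)).symm.mpr
      (by simpa using Finset.mem_range.mp hk)), Real.one_rpow]
  rw [Finset.sum_congr rfl this, Finset.sum_const, Finset.card_range, nsmul_eq_mul, mul_one]
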